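/- Let φ, ψ ∈ L¹(ℝ^{2n}) ∩ L²(ℝ^{2n}) and k,l ∈ ℤⁿ. Then for almost every (ξ,ξ') ∈ 𝕋ⁿ×𝕋ⁿ, [φ, T^t_{(k,l)}ψ](ξ,ξ') = e^{−2πi(k·ξ + l·ξ')} e^{−πi k·l} [φ,ψ](ξ,ξ'). -/

import Mathlib

open MeasureTheory Complex Filter
open scoped Real ENNReal

noncomputable section

/-- Integer–real dot product. -/
def idot {n : ℕ} (k : Fin n → ℤ) (x : Fin n → ℝ) : ℝ := ∑ i, (k i : ℝ) * x i

/-- Integer–integer dot product. -/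
def iidot {n : ℕ} (k l : Fin n → ℤ) : ℤ := ∑ i, k i * l i

/-- Cast an integer vector to a real vector. -/
def intCast {n : ℕ} (k : Fin n → ℤ) : Fin n → ℝ := fun i => (k i : ℝ)

/-- The twisted translation `T^t_{(k,l)} φ` on `ℝⁿ × ℝⁿ`:
`T^t_{(k,l)}φ(x,y) = e^{πi(x·l − y·k)} φ(x−k, y−l)`. -/
def twistT {n : ℕ} (k l : Fin n → ℤ) (φ : (Fin n → ℝ) × (Fin n → ℝ) → ℂ) :
    (Fin n → ℝ) × (Fin n → ℝ) → ℂ := fun p =>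
  Complex.exp (Real.pi * Complex.I * (idot l p.1 - idot k p.2)) *
    φ (p.1 - intCast k, p.2 - intCast l)

/-- The kernel of the Weyl transform of `φ`:
`K_φ(ξ,η) = ∫_{ℝⁿ} φ(x, η−ξ) e^{πi x·(ξ+η)} dx`. -/
def weylKernel {n : ℕ} (φ : (Fin n → ℝ) × (Fin n → ℝ) → ℂ) :
    (Fin n → ℝ) × (Fin n → ℝ) → ℂ := fun p =>
  ∫ x : Fin n → ℝ, φ (x, p.2 - p.1) *
    Complex.exp (Real.pi * Complex.I * (∑ i, x i * (p.1 i + p.2 i)))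

/-- The Zak transform of a kernel `K ∈ L²(ℝ^{2n})`:
`Z K(ξ,ξ',η) = Σ_{m∈ℤⁿ} K(m+ξ,η) e^{−2πi m·ξ'}`. -/
def zakK {n : ℕ} (K : (Fin n → ℝ) × (Fin n → ℝ) → ℂ)
    (ξ ξ' η : Fin n → ℝ) : ℂ :=
  ∑' m : Fin n → ℤ, K (intCast m + ξ, η) *
    Complex.exp (-(2 * Real.pi) * Complex.I * idot m ξ')

/-- The Weyl–Zak transform of `φ`. -/
def zakW {n : ℕ} (φ : (Fin n → ℝ) × (Fin n → ℝ) → ℂ)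
    (ξ ξ' η : Fin n → ℝ) : ℂ := zakK (weylKernel φ) ξ ξ' η

/-- The bracket map `[φ,ψ](ξ,ξ') = ∫_{ℝⁿ} Z_Wφ(ξ,ξ',η) conj(Z_Wψ(ξ,ξ',η)) dη`. -/
def bracket {n : ℕ} (φ ψ : (Fin n → ℝ) × (Fin n → ℝ) → ℂ)
    (ξ ξ' : Fin n → ℝ) : ℂ :=
  ∫ η : Fin n → ℝ, zakW φ ξ ξ' η * (starRingEnd ℂ) (zakW ψ ξ ξ' η)

/-- The (real-valued) autocorrelation bracket `[φ,φ](ξ,ξ') = ∫_{ℝⁿ} |Z_Wφ(ξ,ξ',η)|² dη`. -/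
def abracket {n : ℕ} (φ : (Fin n → ℝ) × (Fin n → ℝ) → ℂ)
    (ξ ξ' : Fin n → ℝ) : ℝ :=
  ∫ η : Fin n → ℝ, ‖zakW φ ξ ξ' η‖ ^ 2

/-- The fundamental domain `[0,1)ⁿ` of `𝕋ⁿ`. -/
def box (n : ℕ) : Set (Fin n → ℝ) := Set.univ.pi fun _ => Set.Ico (0 : ℝ) 1

/-- The `L²` inner product (conjugate-linear in the second argument). -/
def L2inner {α : Type*} [MeasurableSpace α] (μ : Measure α) (f g : α → ℂ) : ℂ :=
  ∫ x, f x * (starRingEnd ℂ) (g x) ∂μ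

/-- `f` belongs to the closed linear span in `L²(ℝ^{2n})` of the twisted translates
`{T^t_{(k,l)}φ : k,l ∈ ℤⁿ}`, i.e. to `V^t(φ)`. -/
def inVt {n : ℕ} (φ f : (Fin n → ℝ) × (Fin n → ℝ) → ℂ) : Prop :=
  ∀ ε : ℝ, 0 < ε →
    ∃ (s : Finset ((Fin n → ℤ) × (Fin n → ℤ))) (a : (Fin n → ℤ) × (Fin n → ℤ) → ℂ),
      eLpNorm (fun p => f p - ∑ kl ∈ s, a kl * twistT kl.1 kl.2 φ p) 2 volume
        < ENNReal.ofReal ε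

lemma idot_add_right {n : ℕ} (k : Fin n → ℤ) (x y : Fin n → ℝ) :
    idot k (x + y) = idot k x + idot k y := by
  simp [idot, mul_add, Finset.sum_add_distrib]

lemma idot_add_left {n : ℕ} (k m : Fin n → ℤ) (x : Fin n → ℝ) :
    idot (k + m) x = idot k x + idot m x := by
  simp [idot, add_mul, Finset.sum_add_distrib]

lemma idot_intCast {n : ℕ} (a b : Fin n → ℤ) :
    idot a (intCast b) = ((iidot a b : ℤ) : ℝ) := by
  simp [idot, iidot, intCast]

lemma iidot_comm {n : ℕ} (a b : Fin n → ℤ) : iidot a b = iidot b a := by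
  simp [iidot, mul_comm]

lemma intCast_add {n : ℕ} (a b : Fin n → ℤ) :
    intCast (a + b) = intCast a + intCast b := by
  funext i; simp [intCast]

lemma weylKernel_twistT {n : ℕ} (ψ : (Fin n → ℝ) × (Fin n → ℝ) → ℂ)
    (k l : Fin n → ℤ) (p : (Fin n → ℝ) × (Fin n → ℝ)) :
    weylKernel (twistT k l ψ) p
      = Complex.exp (Real.pi * Complex.I * (((iidot k l : ℤ) : ℝ) + 2 * idot k p.1)) *
          weylKernel ψ (p.1 + intCast l, p.2) := by
  unfold weylKernel twistT
  rw [← integral_const_mul]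
  rw [show (∫ x : Fin n → ℝ,
        (Complex.exp (Real.pi * Complex.I * (idot l x - idot k (p.2 - p.1))) *
            ψ (x - intCast k, p.2 - p.1 - intCast l)) *
          Complex.exp (Real.pi * Complex.I * ((∑ i, x i * (p.1 i + p.2 i) : ℝ))))
      = ∫ x : Fin n → ℝ,
        (Complex.exp (Real.pi * Complex.I * (idot l (x + intCast k) - idot k (p.2 - p.1))) *
            ψ (x + intCast k - intCast k, p.2 - p.1 - intCast l)) *
          Complex.exp (Real.pi * Complex.I *
            ((∑ i, (x + intCast k) i * (p.1 i + p.2 i) : ℝ)))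
      from (integral_add_right_eq_self _ (intCast k)).symm]
  congr 1
  funext x
  rw [add_sub_cancel_right, sub_sub]
  have hshuf : ∀ (a b c d z : ℂ), a + b = c + d →
      Complex.exp a * z * Complex.exp b = Complex.exp c * (z * Complex.exp d) := by
    intro a b c d z h
    rw [show Complex.exp a * z * Complex.exp b = z * (Complex.exp a * Complex.exp b) from by ring,
      ← Complex.exp_add, h, Complex.exp_add]
    ring
  refine hshuf _ _ _ _ _ ?_
  rw [← mul_add, ← mul_add]
  congr 1
  have hA : idot l (x + intCast k) - idot k (p.2 - p.1) +
        (∑ i, (x + intCast k) i * (p.1 i + p.2 i))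
      = ((iidot k l : ℤ) : ℝ) + 2 * idot k p.1 + ∑ i, x i * ((p.1 + intCast l) i + p.2 i) := by
    simp only [idot, iidot, intCast, Pi.add_apply, Pi.sub_apply, Int.cast_sum, Int.cast_mul]
    rw [← Finset.sum_sub_distrib, ← Finset.sum_add_distrib, Finset.mul_sum,
      ← Finset.sum_add_distrib, ← Finset.sum_add_distrib]
    exact Finset.sum_congr rfl fun i _ => by ring
  have := congrArg (fun r : ℝ => (r : ℂ)) hA
  push_cast at this ⊢
  simpa using this

lemma zakW_twistT {n : ℕ} (ψ : (Fin n → ℝ) × (Fin n → ℝ) → ℂ)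
    (k l : Fin n → ℤ) (ξ ξ' η : Fin n → ℝ) :
    zakW (twistT k l ψ) ξ ξ' η
      = Complex.exp (Real.pi * Complex.I * ((iidot k l : ℤ) : ℝ)) *
          Complex.exp (2 * Real.pi * Complex.I * ((idot k ξ + idot l ξ' : ℝ))) *
          zakW ψ ξ ξ' η := by
  unfold zakW zakK
  set c : ℂ := Complex.exp (Real.pi * Complex.I * ((iidot k l : ℤ) : ℝ)) *
      Complex.exp (2 * Real.pi * Complex.I * ((idot k ξ + idot l ξ' : ℝ))) with hc
  have key : ∀ m : Fin n → ℤ,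
      weylKernel (twistT k l ψ) (intCast m + ξ, η) *
          Complex.exp (-(2 * Real.pi) * Complex.I * (idot m ξ' : ℝ))
        = c * (weylKernel ψ (intCast (m + l) + ξ, η) *
            Complex.exp (-(2 * Real.pi) * Complex.I * (idot (m + l) ξ' : ℝ))) := by
    intro m
    rw [weylKernel_twistT]
    have h1 : (intCast m + ξ, η).1 + intCast l = intCast (m + l) + ξ := by
      rw [intCast_add]; simp; abel
    rw [show ((intCast m + ξ, η).1 + intCast l, (intCast m + ξ, η).2)
        = (intCast (m + l) + ξ, η) from by rw [← h1]]
    have hexp : Complex.exp (Real.pi * Complex.I *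
          (((iidot k l : ℤ) : ℝ) + 2 * idot k (intCast m + ξ, η).1)) *
          Complex.exp (-(2 * Real.pi) * Complex.I * (idot m ξ' : ℝ))
        = c * Complex.exp (-(2 * Real.pi) * Complex.I * (idot (m + l) ξ' : ℝ)) := by
      rw [hc, ← Complex.exp_add, ← Complex.exp_add, ← Complex.exp_add]
      rw [show Real.pi * Complex.I * (((iidot k l : ℤ) : ℝ) + 2 * idot k (intCast m + ξ, η).1)
            + -(2 * Real.pi) * Complex.I * (idot m ξ' : ℝ)
          = ((iidot k m : ℤ) : ℂ) * (2 * Real.pi * Complex.I) +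
            (Real.pi * Complex.I * ((iidot k l : ℤ) : ℝ) +
              2 * Real.pi * Complex.I * ((idot k ξ + idot l ξ' : ℝ)) +
              -(2 * Real.pi) * Complex.I * (idot (m + l) ξ' : ℝ)) from by
        simp only [idot_add_right, idot_add_left, idot_intCast]
        push_cast
        ring]
      rw [Complex.exp_add, Complex.exp_int_mul_two_pi_mul_I, one_mul]
    rw [mul_comm (Complex.exp _) (weylKernel ψ _), mul_assoc, hexp]
    ring
  rw [tsum_congr key, tsum_mul_left]
  congr 1
  exact (Equiv.addRight l).tsum_eq fun m =>
    weylKernel ψ (intCast m + ξ, η) * Complex.exp (-(2 * Real.pi) * Complex.I * (idot m ξ' : ℝ))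

/-- `[φ, T^t_{(k,l)}ψ] = e^{−2πi(k·ξ+l·ξ')} e^{−πi k·l} [φ,ψ]` a.e. on `𝕋ⁿ×𝕋ⁿ`. -/
theorem bracket_twistT_right {n : ℕ} (φ ψ : (Fin n → ℝ) × (Fin n → ℝ) → ℂ)
    (hφ1 : Integrable φ volume) (hφ2 : MemLp φ 2 volume)
    (hψ1 : Integrable ψ volume) (hψ2 : MemLp ψ 2 volume) (k l : Fin n → ℤ) :
    ∀ᵐ q : (Fin n → ℝ) × (Fin n → ℝ) ∂(volume.restrict (box n ×ˢ box n)),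
      bracket φ (twistT k l ψ) q.1 q.2
        = Complex.exp (-(2 * Real.pi) * Complex.I * (idot k q.1 + idot l q.2)) *
            Complex.exp (-(Real.pi) * Complex.I * ((iidot k l : ℤ) : ℝ)) *
            bracket φ ψ q.1 q.2 := by
  refine Filter.Eventually.of_forall fun q => ?_
  unfold bracket
  have h1 : (starRingEnd ℂ) (Complex.exp (Real.pi * Complex.I * ((iidot k l : ℤ) : ℝ)))
      = Complex.exp (-(Real.pi) * Complex.I * ((iidot k l : ℤ) : ℝ)) := by
    rw [← Complex.exp_conj]
    congr 1
    simp only [map_mul, Complex.conj_I, Complex.conj_ofReal]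
    ring
  have h2 : (starRingEnd ℂ) (Complex.exp (2 * Real.pi * Complex.I *
        ((idot k q.1 + idot l q.2 : ℝ))))
      = Complex.exp (-(2 * Real.pi) * Complex.I * ((idot k q.1 + idot l q.2 : ℝ))) := by
    rw [← Complex.exp_conj]
    congr 1
    simp only [map_mul, Complex.conj_I, Complex.conj_ofReal, map_ofNat]
    ring
  have hpt : ∀ η : Fin n → ℝ,
      zakW φ q.1 q.2 η * (starRingEnd ℂ) (zakW (twistT k l ψ) q.1 q.2 η)
        = (Complex.exp (-(2 * Real.pi) * Complex.I * ((idot k q.1 + idot l q.2 : ℝ))) *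
            Complex.exp (-(Real.pi) * Complex.I * ((iidot k l : ℤ) : ℝ))) *
          (zakW φ q.1 q.2 η * (starRingEnd ℂ) (zakW ψ q.1 q.2 η)) := by
    intro η
    rw [zakW_twistT, map_mul, map_mul, h1, h2]
    ring
  simp only [hpt]
  rw [integral_const_mul]
  push_cast
  ring
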